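/- For u in H^2(0,1) with zero boundary data, f(u) = -∂_x(G * (u^2 + (1/2)u_x^2)) satisfies ‖f(u)‖_{H^2} ≤ (3/2)‖u‖_{H^2}^2. -/

import Mathlib

open MeasureTheory
open intervalIntegral

noncomputable def Gper : ℝ → ℝ := fun x => Real.cosh (Int.fract x - 1/2) / (2 * Real.sinh (1/2))

noncomputable def convG (h : ℝ → ℝ) : ℝ → ℝ := fun x => ∫ y in (0:ℝ)..1, Gper (x - y) * h y

noncomputable def H1norm (f : ℝ → ℝ) : ℝ :=
  Real.sqrt ((∫ x in (0:ℝ)..1, (f x)^2) + ∫ x in (0:ℝ)..1, (deriv f x)^2)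

noncomputable def H2norm (f : ℝ → ℝ) : ℝ :=
  Real.sqrt ((∫ x in (0:ℝ)..1, (f x)^2) + (∫ x in (0:ℝ)..1, (deriv f x)^2)
    + ∫ x in (0:ℝ)..1, (deriv (deriv f) x)^2)

noncomputable def fCH (u : ℝ → ℝ) : ℝ → ℝ :=
  fun x => -deriv (convG fun y => (u y)^2 + (1/2) * (deriv u y)^2) x


noncomputable def Ph (h : ℝ → ℝ) (x : ℝ) : ℝ := ∫ y in (0:ℝ)..x, Real.cosh (y + 1/2) * h y
noncomputable def Qh (h : ℝ → ℝ) (x : ℝ) : ℝ := ∫ y in (0:ℝ)..x, Real.sinh (y + 1/2) * h y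
noncomputable def Rh (h : ℝ → ℝ) (x : ℝ) : ℝ := ∫ y in x..(1:ℝ), Real.cosh (1/2 - y) * h y
noncomputable def Th (h : ℝ → ℝ) (x : ℝ) : ℝ := ∫ y in x..(1:ℝ), Real.sinh (1/2 - y) * h y

noncomputable def W0s (h : ℝ → ℝ) (x : ℝ) : ℝ :=
  (Real.cosh x * Ph h x - Real.sinh x * Qh h x + Real.cosh x * Rh h x + Real.sinh x * Th h x)
    / (2 * Real.sinh (1/2))

noncomputable def W1s (h : ℝ → ℝ) (x : ℝ) : ℝ :=
  (Real.sinh x * Ph h x - Real.cosh x * Qh h x + Real.sinh x * Rh h x + Real.cosh x * Th h x)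
    / (2 * Real.sinh (1/2))

section kernels
variable {h : ℝ → ℝ} (hc : Continuous h)
include hc

lemma hasDerivAt_Ph (x : ℝ) : HasDerivAt (Ph h) (Real.cosh (x + 1/2) * h x) x := by
  have hcont : Continuous fun y => Real.cosh (y + 1/2) * h y :=
    (Real.continuous_cosh.comp (by continuity)).mul hc
  exact intervalIntegral.integral_hasDerivAt_right (hcont.intervalIntegrable _ _)
    (hcont.stronglyMeasurableAtFilter _ _) hcont.continuousAt

lemma hasDerivAt_Qh (x : ℝ) : HasDerivAt (Qh h) (Real.sinh (x + 1/2) * h x) x := by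
  have hcont : Continuous fun y => Real.sinh (y + 1/2) * h y :=
    (Real.continuous_sinh.comp (by continuity)).mul hc
  exact intervalIntegral.integral_hasDerivAt_right (hcont.intervalIntegrable _ _)
    (hcont.stronglyMeasurableAtFilter _ _) hcont.continuousAt

lemma hasDerivAt_Rh (x : ℝ) : HasDerivAt (Rh h) (-(Real.cosh (1/2 - x) * h x)) x := by
  have hcont : Continuous fun y => Real.cosh (1/2 - y) * h y :=
    (Real.continuous_cosh.comp (by continuity)).mul hc
  have : HasDerivAt (fun x => ∫ y in (1:ℝ)..x, Real.cosh (1/2 - y) * h y)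
      (Real.cosh (1/2 - x) * h x) x :=
    intervalIntegral.integral_hasDerivAt_right (hcont.intervalIntegrable _ _)
      (hcont.stronglyMeasurableAtFilter _ _) hcont.continuousAt
  have h2 := this.neg
  have he : Rh h = fun t => -∫ y in (1:ℝ)..t, Real.cosh (1/2 - y) * h y :=
    funext fun t => intervalIntegral.integral_symm 1 t
  rw [he]
  exact h2

lemma hasDerivAt_Th (x : ℝ) : HasDerivAt (Th h) (-(Real.sinh (1/2 - x) * h x)) x := by
  have hcont : Continuous fun y => Real.sinh (1/2 - y) * h y :=
    (Real.continuous_sinh.comp (by continuity)).mul hc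
  have : HasDerivAt (fun x => ∫ y in (1:ℝ)..x, Real.sinh (1/2 - y) * h y)
      (Real.sinh (1/2 - x) * h x) x :=
    intervalIntegral.integral_hasDerivAt_right (hcont.intervalIntegrable _ _)
      (hcont.stronglyMeasurableAtFilter _ _) hcont.continuousAt
  have h2 := this.neg
  have he : Th h = fun t => -∫ y in (1:ℝ)..t, Real.sinh (1/2 - y) * h y :=
    funext fun t => intervalIntegral.integral_symm 1 t
  rw [he]
  exact h2

lemma hasDerivAt_W0s (x : ℝ) : HasDerivAt (W0s h) (W1s h x) x := by
  have hP := hasDerivAt_Ph hc x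
  have hQ := hasDerivAt_Qh hc x
  have hR := hasDerivAt_Rh hc x
  have hT := hasDerivAt_Th hc x
  have hx1 : HasDerivAt (fun x => Real.cosh x * Ph h x)
      (Real.sinh x * Ph h x + Real.cosh x * (Real.cosh (x + 1/2) * h x)) x :=
    (Real.hasDerivAt_cosh x).mul hP
  have hx2 : HasDerivAt (fun x => Real.sinh x * Qh h x)
      (Real.cosh x * Qh h x + Real.sinh x * (Real.sinh (x + 1/2) * h x)) x :=
    (Real.hasDerivAt_sinh x).mul hQ
  have hx3 : HasDerivAt (fun x => Real.cosh x * Rh h x)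
      (Real.sinh x * Rh h x + Real.cosh x * (-(Real.cosh (1/2 - x) * h x))) x :=
    (Real.hasDerivAt_cosh x).mul hR
  have hx4 : HasDerivAt (fun x => Real.sinh x * Th h x)
      (Real.cosh x * Th h x + Real.sinh x * (-(Real.sinh (1/2 - x) * h x))) x :=
    (Real.hasDerivAt_sinh x).mul hT
  have := (((hx1.sub hx2).add hx3).add hx4).div_const (2 * Real.sinh (1/2))
  have key : ((Real.sinh x * Ph h x + Real.cosh x * (Real.cosh (x + 1/2) * h x)) -
      (Real.cosh x * Qh h x + Real.sinh x * (Real.sinh (x + 1/2) * h x)) +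
      (Real.sinh x * Rh h x + Real.cosh x * (-(Real.cosh (1/2 - x) * h x))) +
      (Real.cosh x * Th h x + Real.sinh x * (-(Real.sinh (1/2 - x) * h x))))
      / (2 * Real.sinh (1/2)) = W1s h x := by
    have e1 : Real.cosh x * Real.cosh (x + 1/2) - Real.sinh x * Real.sinh (x + 1/2)
        = Real.cosh (1/2) := by
      have e : x - (x + 1/2) = -(1/2) := by ring
      rw [← Real.cosh_sub, e, Real.cosh_neg]
    have e2 : Real.cosh x * Real.cosh (1/2 - x) + Real.sinh x * Real.sinh (1/2 - x)
        = Real.cosh (1/2) := by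
      have e := Real.cosh_add x (1/2 - x)
      have e' : x + (1/2 - x) = 1/2 := by ring
      rw [e'] at e; linarith
    unfold W1s
    congr 1
    linear_combination h x * e1 - h x * e2
  rw [key] at this
  exact this

lemma hasDerivAt_W1s (x : ℝ) : HasDerivAt (W1s h) (W0s h x - h x) x := by
  have hP := hasDerivAt_Ph hc x
  have hQ := hasDerivAt_Qh hc x
  have hR := hasDerivAt_Rh hc x
  have hT := hasDerivAt_Th hc x
  have hx1 : HasDerivAt (fun x => Real.sinh x * Ph h x)
      (Real.cosh x * Ph h x + Real.sinh x * (Real.cosh (x + 1/2) * h x)) x :=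
    (Real.hasDerivAt_sinh x).mul hP
  have hx2 : HasDerivAt (fun x => Real.cosh x * Qh h x)
      (Real.sinh x * Qh h x + Real.cosh x * (Real.sinh (x + 1/2) * h x)) x :=
    (Real.hasDerivAt_cosh x).mul hQ
  have hx3 : HasDerivAt (fun x => Real.sinh x * Rh h x)
      (Real.cosh x * Rh h x + Real.sinh x * (-(Real.cosh (1/2 - x) * h x))) x :=
    (Real.hasDerivAt_sinh x).mul hR
  have hx4 : HasDerivAt (fun x => Real.cosh x * Th h x)
      (Real.sinh x * Th h x + Real.cosh x * (-(Real.sinh (1/2 - x) * h x))) x :=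
    (Real.hasDerivAt_cosh x).mul hT
  have hder := (((hx1.sub hx2).add hx3).add hx4).div_const (2 * Real.sinh (1/2))
  have f1 : Real.sinh x * Real.cosh (x + 1/2) - Real.cosh x * Real.sinh (x + 1/2)
      = -Real.sinh (1/2) := by
    have e : x - (x + 1/2) = -(1/2) := by ring
    rw [← Real.sinh_sub, e, Real.sinh_neg]
  have f2 : Real.sinh x * Real.cosh (1/2 - x) + Real.cosh x * Real.sinh (1/2 - x)
      = Real.sinh (1/2) := by
    have e := Real.sinh_add x (1/2 - x)
    have e' : x + (1/2 - x) = 1/2 := by ring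
    rw [e'] at e; linarith
  have hs : Real.sinh (1/2) ≠ 0 := ne_of_gt (by positivity)
  have key : ((Real.cosh x * Ph h x + Real.sinh x * (Real.cosh (x + 1/2) * h x)) -
      (Real.sinh x * Qh h x + Real.cosh x * (Real.sinh (x + 1/2) * h x)) +
      (Real.cosh x * Rh h x + Real.sinh x * (-(Real.cosh (1/2 - x) * h x))) +
      (Real.sinh x * Th h x + Real.cosh x * (-(Real.sinh (1/2 - x) * h x))))
      / (2 * Real.sinh (1/2)) = W0s h x - h x := by
    have e : W0s h x - h x = ((Real.cosh x * Ph h x - Real.sinh x * Qh h x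
        + Real.cosh x * Rh h x + Real.sinh x * Th h x) - (2 * Real.sinh (1/2)) * h x)
        / (2 * Real.sinh (1/2)) := by
      unfold W0s; field_simp
    rw [e]
    congr 1
    linear_combination h x * f1 - h x * f2
  rw [key] at hder
  exact hder

end kernels

lemma convG_eq_W0s {h : ℝ → ℝ} (hc : Continuous h) {x : ℝ} (hx : x ∈ Set.Ioo (0:ℝ) 1) :
    convG h x = W0s h x := by
  obtain ⟨hx0, hx1⟩ := hx
  have hs : Real.sinh (1/2) ≠ 0 := ne_of_gt (by positivity)
  -- the two smooth kernels
  set g1 : ℝ → ℝ := fun y => (Real.cosh x * (Real.cosh (y + 1/2) * h y)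
    - Real.sinh x * (Real.sinh (y + 1/2) * h y)) / (2 * Real.sinh (1/2)) with hg1
  set g2 : ℝ → ℝ := fun y => (Real.cosh x * (Real.cosh (1/2 - y) * h y)
    + Real.sinh x * (Real.sinh (1/2 - y) * h y)) / (2 * Real.sinh (1/2)) with hg2
  have kc1 : Continuous fun y : ℝ => Real.cosh (y + 1/2) * h y :=
    (Real.continuous_cosh.comp (continuous_id.add continuous_const)).mul hc
  have ks1 : Continuous fun y : ℝ => Real.sinh (y + 1/2) * h y :=
    (Real.continuous_sinh.comp (continuous_id.add continuous_const)).mul hc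
  have kc2 : Continuous fun y : ℝ => Real.cosh (1/2 - y) * h y :=
    (Real.continuous_cosh.comp (continuous_const.sub continuous_id)).mul hc
  have ks2 : Continuous fun y : ℝ => Real.sinh (1/2 - y) * h y :=
    (Real.continuous_sinh.comp (continuous_const.sub continuous_id)).mul hc
  have hg1c : Continuous g1 := by
    apply Continuous.div_const
    exact (continuous_const.mul kc1).sub (continuous_const.mul ks1)
  have hg2c : Continuous g2 := by
    apply Continuous.div_const
    exact (continuous_const.mul kc2).add (continuous_const.mul ks2)
  have hEq1 : Set.EqOn (fun y => Gper (x - y) * h y) g1 (Set.uIcc 0 x) := by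
    intro y hy
    rw [Set.uIcc_of_le (le_of_lt hx0)] at hy
    obtain ⟨hy0, hyx⟩ := hy
    have hfr : Int.fract (x - y) = x - y :=
      Int.fract_eq_self.mpr ⟨by linarith, by linarith⟩
    have hker : Real.cosh (x - y - 1/2) = Real.cosh x * Real.cosh (y + 1/2)
        - Real.sinh x * Real.sinh (y + 1/2) := by
      have e : x - y - 1/2 = x - (y + 1/2) := by ring
      rw [e, Real.cosh_sub]
    simp only [Gper, hg1, hfr]
    rw [hker]
    ring
  have hEq2 : Set.EqOn (fun y => Gper (x - y) * h y) g2 (Set.uIcc x 1) := by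
    intro y hy
    rw [Set.uIcc_of_le (le_of_lt hx1)] at hy
    obtain ⟨hyx, hy1⟩ := hy
    have hker : Real.cosh (x - y + 1/2) = Real.cosh x * Real.cosh (1/2 - y)
        + Real.sinh x * Real.sinh (1/2 - y) := by
      have e : x - y + 1/2 = x + (1/2 - y) := by ring
      rw [e, Real.cosh_add]
    have hfr : Real.cosh (Int.fract (x - y) - 1/2) = Real.cosh (x - y + 1/2) := by
      rcases eq_or_lt_of_le hyx with hxy | hxy
      · rw [← hxy, sub_self, Int.fract_zero,
          show (0:ℝ) - 1/2 = -(1/2) by ring, Real.cosh_neg]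
        norm_num
      · have : Int.fract (x - y) = x - y + 1 := by
          rw [← Int.fract_add_one]
          exact Int.fract_eq_self.mpr ⟨by linarith, by linarith⟩
        rw [this]
        congr 1
        ring
    simp only [Gper, hg2]
    rw [hfr, hker]
    ring
  have hi1 : IntervalIntegrable (fun y => Gper (x - y) * h y) volume 0 x :=
    (hg1c.intervalIntegrable _ _).congr_ae
      (ae_restrict_of_forall_mem measurableSet_uIoc
        fun y hy => (hEq1 (Set.uIoc_subset_uIcc hy)).symm)
  have hi2 : IntervalIntegrable (fun y => Gper (x - y) * h y) volume x 1 :=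
    (hg2c.intervalIntegrable _ _).congr_ae
      (ae_restrict_of_forall_mem measurableSet_uIoc
        fun y hy => (hEq2 (Set.uIoc_subset_uIcc hy)).symm)
  have hsplit : convG h x = (∫ y in (0:ℝ)..x, Gper (x - y) * h y)
      + ∫ y in x..(1:ℝ), Gper (x - y) * h y :=
    (integral_add_adjacent_intervals hi1 hi2).symm
  have hI1 : (∫ y in (0:ℝ)..x, Gper (x - y) * h y)
      = (Real.cosh x * Ph h x - Real.sinh x * Qh h x) / (2 * Real.sinh (1/2)) := by
    rw [integral_congr hEq1, hg1]
    rw [intervalIntegral.integral_div]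
    congr 1
    rw [intervalIntegral.integral_sub
      ((kc1.const_mul _).intervalIntegrable _ _)
      ((ks1.const_mul _).intervalIntegrable _ _),
      intervalIntegral.integral_const_mul, intervalIntegral.integral_const_mul]
    rfl
  have hI2 : (∫ y in x..(1:ℝ), Gper (x - y) * h y)
      = (Real.cosh x * Rh h x + Real.sinh x * Th h x) / (2 * Real.sinh (1/2)) := by
    rw [integral_congr hEq2, hg2]
    rw [intervalIntegral.integral_div]
    congr 1
    rw [intervalIntegral.integral_add
      ((kc2.const_mul _).intervalIntegrable _ _)
      ((ks2.const_mul _).intervalIntegrable _ _),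
      intervalIntegral.integral_const_mul, intervalIntegral.integral_const_mul]
    rfl
  rw [hsplit, hI1, hI2]
  unfold W0s
  field_simp
  ring

section
variable {h : ℝ → ℝ} (hc : Continuous h)
include hc

lemma combo_eq_cosh : Real.cosh 1 * Ph h 1 - Real.sinh 1 * Qh h 1 = Rh h 0 := by
  have kc1 : Continuous fun y : ℝ => Real.cosh (y + 1/2) * h y :=
    (Real.continuous_cosh.comp (continuous_id.add continuous_const)).mul hc
  have ks1 : Continuous fun y : ℝ => Real.sinh (y + 1/2) * h y :=
    (Real.continuous_sinh.comp (continuous_id.add continuous_const)).mul hc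
  unfold Ph Qh Rh
  rw [← intervalIntegral.integral_const_mul, ← intervalIntegral.integral_const_mul,
    ← intervalIntegral.integral_sub ((kc1.const_mul _).intervalIntegrable _ _)
      ((ks1.const_mul _).intervalIntegrable _ _)]
  apply intervalIntegral.integral_congr
  intro y _
  have e : (1:ℝ) - (y + 1/2) = 1/2 - y := by ring
  have := Real.cosh_sub 1 (y + 1/2)
  rw [e] at this
  simp only
  rw [this]
  ring

lemma combo_eq_sinh : Real.sinh 1 * Ph h 1 - Real.cosh 1 * Qh h 1 = Th h 0 := by
  have kc1 : Continuous fun y : ℝ => Real.cosh (y + 1/2) * h y :=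
    (Real.continuous_cosh.comp (continuous_id.add continuous_const)).mul hc
  have ks1 : Continuous fun y : ℝ => Real.sinh (y + 1/2) * h y :=
    (Real.continuous_sinh.comp (continuous_id.add continuous_const)).mul hc
  unfold Ph Qh Th
  rw [← intervalIntegral.integral_const_mul, ← intervalIntegral.integral_const_mul,
    ← intervalIntegral.integral_sub ((kc1.const_mul _).intervalIntegrable _ _)
      ((ks1.const_mul _).intervalIntegrable _ _)]
  apply intervalIntegral.integral_congr
  intro y _
  have e : (1:ℝ) - (y + 1/2) = 1/2 - y := by ring
  have := Real.sinh_sub 1 (y + 1/2)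
  rw [e] at this
  simp only
  rw [this]
  ring

lemma W0s_period : W0s h 1 = W0s h 0 := by
  unfold W0s
  rw [show Rh h 1 = 0 by unfold Rh; exact intervalIntegral.integral_same,
    show Th h 1 = 0 by unfold Th; exact intervalIntegral.integral_same,
    show Ph h 0 = 0 from intervalIntegral.integral_same,
    show Qh h 0 = 0 from intervalIntegral.integral_same]
  rw [Real.cosh_zero, Real.sinh_zero]
  rw [show Real.cosh 1 * Ph h 1 - Real.sinh 1 * Qh h 1 + Real.cosh 1 * 0 + Real.sinh 1 * 0
    = Real.cosh 1 * Ph h 1 - Real.sinh 1 * Qh h 1 by ring, combo_eq_cosh hc]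
  ring

lemma W1s_period : W1s h 1 = W1s h 0 := by
  unfold W1s
  rw [show Rh h 1 = 0 by unfold Rh; exact intervalIntegral.integral_same,
    show Th h 1 = 0 by unfold Th; exact intervalIntegral.integral_same,
    show Ph h 0 = 0 from intervalIntegral.integral_same,
    show Qh h 0 = 0 from intervalIntegral.integral_same]
  rw [Real.cosh_zero, Real.sinh_zero]
  rw [show Real.sinh 1 * Ph h 1 - Real.cosh 1 * Qh h 1 + Real.sinh 1 * 0 + Real.cosh 1 * 0
    = Real.sinh 1 * Ph h 1 - Real.cosh 1 * Qh h 1 by ring, combo_eq_sinh hc]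
  ring

end

lemma intervalIntegral_congr_Ioo {f g : ℝ → ℝ} (he : ∀ x ∈ Set.Ioo (0:ℝ) 1, f x = g x) :
    ∫ x in (0:ℝ)..1, f x = ∫ x in (0:ℝ)..1, g x := by
  apply intervalIntegral.integral_congr_ae
  have h1 : (volume : Measure ℝ) {(1:ℝ)} = 0 := measure_singleton 1
  filter_upwards [compl_mem_ae_iff.mpr h1] with x hx1 hxI
  rw [Set.uIoc_of_le (by norm_num : (0:ℝ) ≤ 1)] at hxI
  exact he x ⟨hxI.1, lt_of_le_of_ne hxI.2 (by simpa using hx1)⟩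

lemma sq_le_int {v dv : ℝ → ℝ} (hv : ∀ x, HasDerivAt v (dv x) x)
    (hvc : Continuous v) (hdc : Continuous dv) (hv0 : v 0 = 0) {x : ℝ}
    (hx : x ∈ Set.Icc (0:ℝ) 1) :
    v x ^ 2 ≤ (∫ t in (0:ℝ)..1, (v t)^2) + ∫ t in (0:ℝ)..1, (dv t)^2 := by
  have hF : ∀ t, HasDerivAt (fun s => v s ^ 2) (2 * v t * dv t) t := by
    intro t
    have := (hv t).fun_pow 2
    convert this using 1
    all_goals try rfl
    push_cast
    ring
  have hcont2 : Continuous fun t => 2 * v t * dv t :=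
    (continuous_const.mul hvc).mul hdc
  have key : v x ^ 2 = ∫ t in (0:ℝ)..x, 2 * v t * dv t := by
    rw [intervalIntegral.integral_eq_sub_of_hasDerivAt (fun t _ => hF t)
      (hcont2.intervalIntegrable _ _), hv0]
    ring
  have step1 : (∫ t in (0:ℝ)..x, 2 * v t * dv t) ≤ ∫ t in (0:ℝ)..x, ((v t)^2 + (dv t)^2) := by
    apply intervalIntegral.integral_mono_on hx.1 (hcont2.intervalIntegrable _ _)
      (((hvc.pow 2).add (hdc.pow 2)).intervalIntegrable _ _)
    intro t _
    simp only [Pi.add_apply, Pi.pow_apply]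
    nlinarith [sq_nonneg (v t - dv t)]
  have hsplit : (∫ t in (0:ℝ)..1, ((v t)^2 + (dv t)^2))
      = (∫ t in (0:ℝ)..x, ((v t)^2 + (dv t)^2)) + ∫ t in x..(1:ℝ), ((v t)^2 + (dv t)^2) :=
    (intervalIntegral.integral_add_adjacent_intervals
      ((((hvc.pow 2).add (hdc.pow 2))).intervalIntegrable _ _)
      ((((hvc.pow 2).add (hdc.pow 2))).intervalIntegrable _ _)).symm
  have hnn : (0:ℝ) ≤ ∫ t in x..(1:ℝ), ((v t)^2 + (dv t)^2) := by
    apply intervalIntegral.integral_nonneg hx.2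
    intro t _
    positivity
  have hadd : (∫ t in (0:ℝ)..1, ((v t)^2 + (dv t)^2))
      = (∫ t in (0:ℝ)..1, (v t)^2) + ∫ t in (0:ℝ)..1, (dv t)^2 :=
    intervalIntegral.integral_add ((hvc.pow 2).intervalIntegrable _ _)
      ((hdc.pow 2).intervalIntegrable _ _)
  rw [key]
  calc (∫ t in (0:ℝ)..x, 2 * v t * dv t) ≤ ∫ t in (0:ℝ)..x, ((v t)^2 + (dv t)^2) := step1
    _ ≤ ∫ t in (0:ℝ)..1, ((v t)^2 + (dv t)^2) := by rw [hsplit]; linarith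
    _ = _ := hadd

set_option maxHeartbeats 1000000 in
/-- Bound `‖f(u)‖_{H²} ≤ (3/2)‖u‖_{H²}²`. -/
theorem stmt5 (u : ℝ → ℝ) (hu : ContDiff ℝ 2 u)
    (hu0 : u 0 = 0) (hu1 : u 1 = 0) (hu0' : deriv u 0 = 0) (hu1' : deriv u 1 = 0) :
    H2norm (fCH u) ≤ (3/2) * (H2norm u)^2 := by
  classical
  -- regularity of u
  have hud : Differentiable ℝ u := hu.differentiable (by norm_num)
  have hcd1 : ContDiff ℝ 1 (deriv u) := by
    have h2 : ContDiff ℝ (1 + 1 : ℕ) u := by exact_mod_cast hu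
    exact (contDiff_succ_iff_deriv.mp h2).2.2
  have hu'd : Differentiable ℝ (deriv u) := hcd1.differentiable (by norm_num)
  have hu''c : Continuous (deriv (deriv u)) := (contDiff_one_iff_deriv.mp hcd1).2
  have huc : Continuous u := hud.continuous
  have hu'c : Continuous (deriv u) := hu'd.continuous
  set h : ℝ → ℝ := fun y => (u y)^2 + (1/2) * (deriv u y)^2 with hh_def
  set hd : ℝ → ℝ := fun x =>
    2 * u x * deriv u x + deriv u x * deriv (deriv u) x with hd_def
  have hc : Continuous h := (huc.pow 2).add (continuous_const.mul (hu'c.pow 2))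
  have hdc : Continuous hd :=
    ((continuous_const.mul huc).mul hu'c).add (hu'c.mul hu''c)
  have hh' : ∀ x, HasDerivAt h (hd x) x := by
    intro x
    have h1 : HasDerivAt u (deriv u x) x := (hud x).hasDerivAt
    have h2 : HasDerivAt (deriv u) (deriv (deriv u) x) x := (hu'd x).hasDerivAt
    have e1 : HasDerivAt (fun y => (u y)^2) (2 * u x * deriv u x) x := by
      have := h1.fun_pow 2
      convert this using 1
      all_goals try rfl
      push_cast; ring
    have e2 : HasDerivAt (fun y => (1/2 : ℝ) * (deriv u y)^2)
        ((1/2) * (2 * deriv u x * deriv (deriv u) x)) x := by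
      have := (h2.fun_pow 2).const_mul (1/2 : ℝ)
      convert this using 1
      all_goals try rfl
      push_cast; ring
    have := e1.fun_add e2
    convert this using 1
    all_goals try rfl
    simp only [hd_def]; ring
  have h0 : h 0 = 0 := by simp [hh_def, hu0, hu0']
  have h1v : h 1 = 0 := by simp [hh_def, hu1, hu1']
  -- derivative identities on (0,1)
  have hW0 := hasDerivAt_W0s hc
  have hW1 := hasDerivAt_W1s hc
  have dW0 : Differentiable ℝ (W0s h) := fun x => (hW0 x).differentiableAt
  have dW1 : Differentiable ℝ (W1s h) := fun x => (hW1 x).differentiableAt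
  have cW0 : Continuous (W0s h) := dW0.continuous
  have cW1 : Continuous (W1s h) := dW1.continuous
  have hconv : ∀ x ∈ Set.Ioo (0:ℝ) 1, deriv (convG h) x = W1s h x := by
    intro x hx
    exact ((hW0 x).congr_of_eventuallyEq (Filter.eventuallyEq_of_mem
      (isOpen_Ioo.mem_nhds hx) fun y hy => convG_eq_W0s hc hy)).deriv
  have hfCH : ∀ x ∈ Set.Ioo (0:ℝ) 1, fCH u x = -W1s h x := by
    intro x hx
    show -deriv (convG fun y => (u y)^2 + (1/2) * (deriv u y)^2) x = -W1s h x
    rw [← hh_def, hconv x hx]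
  have hfd1 : ∀ x ∈ Set.Ioo (0:ℝ) 1, HasDerivAt (fCH u) (-(W0s h x - h x)) x := by
    intro x hx
    exact HasDerivAt.congr_of_eventuallyEq ((hW1 x).neg)
      (Filter.eventuallyEq_of_mem (isOpen_Ioo.mem_nhds hx) fun y hy => hfCH y hy)
  have hfd1' : ∀ x ∈ Set.Ioo (0:ℝ) 1, deriv (fCH u) x = -(W0s h x - h x) :=
    fun x hx => (hfd1 x hx).deriv
  have hfd2 : ∀ x ∈ Set.Ioo (0:ℝ) 1, deriv (deriv (fCH u)) x = -(W1s h x - hd x) := by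
    intro x hx
    refine (HasDerivAt.congr_of_eventuallyEq (((hW0 x).sub (hh' x)).neg)
      (Filter.eventuallyEq_of_mem (isOpen_Ioo.mem_nhds hx) fun y hy => hfd1' y hy)).deriv
  -- rewrite the three H² integrals of fCH u
  have e1 : (∫ x in (0:ℝ)..1, (fCH u x)^2) = ∫ x in (0:ℝ)..1, (W1s h x)^2 :=
    intervalIntegral_congr_Ioo fun x hx => by rw [hfCH x hx]; ring
  have e2 : (∫ x in (0:ℝ)..1, (deriv (fCH u) x)^2)
      = ∫ x in (0:ℝ)..1, (W0s h x - h x)^2 :=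
    intervalIntegral_congr_Ioo fun x hx => by rw [hfd1' x hx]; ring
  have e3 : (∫ x in (0:ℝ)..1, (deriv (deriv (fCH u)) x)^2)
      = ∫ x in (0:ℝ)..1, (W1s h x - hd x)^2 :=
    intervalIntegral_congr_Ioo fun x hx => by rw [hfd2 x hx]; ring
  -- names for the quantities
  set A := ∫ x in (0:ℝ)..1, (W1s h x)^2 with hA_def
  set B := ∫ x in (0:ℝ)..1, (W0s h x - h x)^2 with hB_def
  set C := ∫ x in (0:ℝ)..1, (W1s h x - hd x)^2 with hC_def
  set W00 := ∫ x in (0:ℝ)..1, (W0s h x)^2 with hW00_def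
  set X := ∫ x in (0:ℝ)..1, (h x)^2 with hX_def
  set Y := ∫ x in (0:ℝ)..1, (hd x)^2 with hY_def
  set a2 := ∫ x in (0:ℝ)..1, (u x)^2 with ha2_def
  set b2 := ∫ x in (0:ℝ)..1, (deriv u x)^2 with hb2_def
  set c2 := ∫ x in (0:ℝ)..1, (deriv (deriv u) x)^2 with hc2_def
  -- nonnegativity
  have hA0 : 0 ≤ A := intervalIntegral.integral_nonneg (by norm_num) fun x _ => sq_nonneg _
  have hB0 : 0 ≤ B := intervalIntegral.integral_nonneg (by norm_num) fun x _ => sq_nonneg _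
  have hC0 : 0 ≤ C := intervalIntegral.integral_nonneg (by norm_num) fun x _ => sq_nonneg _
  have hW000 : 0 ≤ W00 := intervalIntegral.integral_nonneg (by norm_num) fun x _ => sq_nonneg _
  have ha20 : 0 ≤ a2 := intervalIntegral.integral_nonneg (by norm_num) fun x _ => sq_nonneg _
  have hb20 : 0 ≤ b2 := intervalIntegral.integral_nonneg (by norm_num) fun x _ => sq_nonneg _
  have hc20 : 0 ≤ c2 := intervalIntegral.integral_nonneg (by norm_num) fun x _ => sq_nonneg _
  -- energy identity 1 : A + ∫ W0s (W0s - h) = 0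
  have hAB : A + (∫ x in (0:ℝ)..1, W0s h x * (W0s h x - h x)) = 0 := by
    have hFTC : (∫ x in (0:ℝ)..1, ((W1s h x)^2 + W0s h x * (W0s h x - h x)))
        = W0s h 1 * W1s h 1 - W0s h 0 * W1s h 0 := by
      refine intervalIntegral.integral_eq_sub_of_hasDerivAt
        (f := fun x => W0s h x * W1s h x) (fun x _ => ?_)
        ((((cW1.fun_pow 2)).fun_add (cW0.fun_mul (cW0.fun_sub hc))).intervalIntegrable _ _)
      have := (hW0 x).fun_mul (hW1 x)
      convert this using 1
      all_goals try rfl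
      ring
    rw [intervalIntegral.integral_add ((cW1.fun_pow 2).intervalIntegrable _ _)
      ((cW0.fun_mul (cW0.fun_sub hc)).intervalIntegrable _ _)] at hFTC
    rw [W0s_period hc, W1s_period hc] at hFTC
    rw [hA_def]
    linarith [hFTC]
  -- energy identity 2 : B + ∫ W1s (W1s - hd) = 0
  have hBC : B + (∫ x in (0:ℝ)..1, W1s h x * (W1s h x - hd x)) = 0 := by
    have hFTC : (∫ x in (0:ℝ)..1, ((W0s h x - h x)^2 + W1s h x * (W1s h x - hd x)))
        = W1s h 1 * (W0s h 1 - h 1) - W1s h 0 * (W0s h 0 - h 0) := by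
      refine intervalIntegral.integral_eq_sub_of_hasDerivAt
        (f := fun x => W1s h x * (W0s h x - h x)) (fun x _ => ?_)
        (((((cW0.fun_sub hc).fun_pow 2)).fun_add (cW1.fun_mul (cW1.fun_sub hdc))).intervalIntegrable _ _)
      have := (hW1 x).fun_mul ((hW0 x).fun_sub (hh' x))
      convert this using 1
      all_goals try rfl
      ring
    rw [intervalIntegral.integral_add (((cW0.fun_sub hc).fun_pow 2).intervalIntegrable _ _)
      ((cW1.fun_mul (cW1.fun_sub hdc)).intervalIntegrable _ _)] at hFTC
    rw [W0s_period hc, W1s_period hc, h0, h1v] at hFTC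
    rw [hB_def]
    linarith [hFTC]
  -- X = W00 + 2A + B
  have hXeq : X = W00 + 2*A + B := by
    have hpt : Set.EqOn (fun x => (h x)^2)
        (fun x => (W0s h x)^2 - 2*(W0s h x * (W0s h x - h x)) + (W0s h x - h x)^2)
        (Set.uIcc (0:ℝ) 1) := fun x _ => by simp only; ring
    rw [hX_def, intervalIntegral.integral_congr hpt]
    rw [intervalIntegral.integral_add
      (((cW0.fun_pow 2).fun_sub (continuous_const.fun_mul (cW0.fun_mul (cW0.fun_sub hc)))).intervalIntegrable _ _)
      (((cW0.fun_sub hc).fun_pow 2).intervalIntegrable _ _),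
      intervalIntegral.integral_sub ((cW0.fun_pow 2).intervalIntegrable _ _)
      ((continuous_const.fun_mul (cW0.fun_mul (cW0.fun_sub hc))).intervalIntegrable _ _),
      intervalIntegral.integral_const_mul]
    rw [hW00_def, hB_def]
    linarith [hAB]
  -- Y = A + 2B + C
  have hYeq : Y = A + 2*B + C := by
    have hpt : Set.EqOn (fun x => (hd x)^2)
        (fun x => (W1s h x)^2 - 2*(W1s h x * (W1s h x - hd x)) + (W1s h x - hd x)^2)
        (Set.uIcc (0:ℝ) 1) := fun x _ => by simp only; ring
    rw [hY_def, intervalIntegral.integral_congr hpt]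
    rw [intervalIntegral.integral_add
      (((cW1.fun_pow 2).fun_sub (continuous_const.fun_mul (cW1.fun_mul (cW1.fun_sub hdc)))).intervalIntegrable _ _)
      (((cW1.fun_sub hdc).fun_pow 2).intervalIntegrable _ _),
      intervalIntegral.integral_sub ((cW1.fun_pow 2).intervalIntegrable _ _)
      ((continuous_const.fun_mul (cW1.fun_mul (cW1.fun_sub hdc))).intervalIntegrable _ _),
      intervalIntegral.integral_const_mul]
    rw [hA_def, hC_def]
    linarith [hBC]
  -- pointwise square bounds
  have husq : ∀ x ∈ Set.Icc (0:ℝ) 1, (u x)^2 ≤ a2 + b2 := fun x hx =>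
    sq_le_int (fun t => (hud t).hasDerivAt) huc hu'c hu0 hx
  have hu'sq : ∀ x ∈ Set.Icc (0:ℝ) 1, (deriv u x)^2 ≤ b2 + c2 := fun x hx =>
    sq_le_int (fun t => (hu'd t).hasDerivAt) hu'c hu''c hu0' hx
  -- ∫ h = a2 + b2/2
  have hinth : (∫ x in (0:ℝ)..1, h x) = a2 + (1/2)*b2 := by
    simp only [hh_def]
    rw [intervalIntegral.integral_add ((huc.fun_pow 2).intervalIntegrable _ _)
      ((continuous_const.fun_mul (hu'c.fun_pow 2)).intervalIntegrable _ _),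
      intervalIntegral.integral_const_mul]
  -- E3 : ∫ u u'' = -b2
  have hE3 : (∫ x in (0:ℝ)..1, u x * deriv (deriv u) x) = -b2 := by
    have hFTC : (∫ x in (0:ℝ)..1, ((deriv u x)^2 + u x * deriv (deriv u) x))
        = u 1 * deriv u 1 - u 0 * deriv u 0 := by
      refine intervalIntegral.integral_eq_sub_of_hasDerivAt
        (f := fun x => u x * deriv u x) (fun x _ => ?_)
        (((hu'c.fun_pow 2).fun_add (huc.fun_mul hu''c)).intervalIntegrable _ _)
      have := ((hud x).hasDerivAt).fun_mul ((hu'd x).hasDerivAt)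
      convert this using 1
      all_goals try rfl
      ring
    rw [intervalIntegral.integral_add ((hu'c.fun_pow 2).intervalIntegrable _ _)
      ((huc.fun_mul hu''c).intervalIntegrable _ _), hu0, hu1] at hFTC
    rw [hb2_def]
    linarith [hFTC]
  -- bound on X
  have hXle : X ≤ (a2 + b2 + (1/2)*(b2 + c2)) * (a2 + (1/2)*b2) := by
    have hmono : X ≤ ∫ x in (0:ℝ)..1, (a2 + b2 + (1/2)*(b2 + c2)) * h x := by
      rw [hX_def]
      apply intervalIntegral.integral_mono_on (by norm_num)
        ((hc.fun_pow 2).intervalIntegrable _ _)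
        ((continuous_const.fun_mul hc).intervalIntegrable _ _)
      intro x hx
      have h1 := husq x hx
      have h2 := hu'sq x hx
      have hh0 : 0 ≤ h x := by simp only [hh_def]; positivity
      have hhle : h x ≤ a2 + b2 + (1/2)*(b2 + c2) := by
        simp only [hh_def]; nlinarith
      nlinarith [mul_nonneg (sub_nonneg.mpr hhle) hh0]
    rw [intervalIntegral.integral_const_mul, hinth] at hmono
    exact hmono
  -- bound on Y
  have hYle : Y ≤ (b2 + c2) * (4*a2 - 4*b2 + c2) := by
    have hmono : Y ≤ ∫ x in (0:ℝ)..1, (b2 + c2) * (2*u x + deriv (deriv u) x)^2 := by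
      rw [hY_def]
      apply intervalIntegral.integral_mono_on (by norm_num)
        ((hdc.fun_pow 2).intervalIntegrable _ _)
        ((continuous_const.fun_mul
          (((continuous_const.fun_mul huc).fun_add hu''c).fun_pow 2)).intervalIntegrable _ _)
      intro x hx
      have h2 := hu'sq x hx
      have hkey : (hd x)^2 = (deriv u x)^2 * (2*u x + deriv (deriv u) x)^2 := by
        simp only [hd_def]; ring
      rw [hkey]
      nlinarith [sq_nonneg (2*u x + deriv (deriv u) x), sq_nonneg (deriv u x)]
    have hexp : (∫ x in (0:ℝ)..1, (2*u x + deriv (deriv u) x)^2) = 4*a2 - 4*b2 + c2 := by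
      have hpt : Set.EqOn (fun x => (2*u x + deriv (deriv u) x)^2)
          (fun x => 4*(u x)^2 + (4*(u x * deriv (deriv u) x) + (deriv (deriv u) x)^2))
          (Set.uIcc (0:ℝ) 1) := fun x _ => by simp only; ring
      rw [intervalIntegral.integral_congr hpt,
        intervalIntegral.integral_add ((continuous_const.fun_mul (huc.fun_pow 2)).intervalIntegrable _ _)
          (((continuous_const.fun_mul (huc.fun_mul hu''c)).fun_add (hu''c.fun_pow 2)).intervalIntegrable _ _),
        intervalIntegral.integral_add
          ((continuous_const.fun_mul (huc.fun_mul hu''c)).intervalIntegrable _ _)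
          ((hu''c.fun_pow 2).intervalIntegrable _ _),
        intervalIntegral.integral_const_mul, intervalIntegral.integral_const_mul, hE3]
      rw [ha2_def, hc2_def]
      ring
    rw [intervalIntegral.integral_const_mul, hexp] at hmono
    exact hmono
  -- assemble
  have hsum : A + B + C ≤ ((3/2) * (a2 + b2 + c2))^2 := by
    nlinarith [sq_nonneg (a2 - b2), mul_nonneg hb20 hc20, mul_nonneg ha20 hb20,
      sq_nonneg (a2 + b2 + c2), mul_nonneg ha20 hc20, sq_nonneg b2, sq_nonneg c2, sq_nonneg a2]
  have hH2u : (H2norm u)^2 = a2 + b2 + c2 := by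
    rw [H2norm, Real.sq_sqrt (by positivity)]
  have hfinal : H2norm (fCH u) = Real.sqrt (A + B + C) := by
    rw [H2norm, e1, e2, e3]
  rw [hfinal, hH2u]
  calc Real.sqrt (A + B + C) ≤ Real.sqrt (((3/2) * (a2 + b2 + c2))^2) :=
        Real.sqrt_le_sqrt hsum
    _ = (3/2) * (a2 + b2 + c2) := Real.sqrt_sq (by positivity)
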